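/- Given a nested dyadic support tree with endpoints l_{n,k}=(2k)2^{-n}, m_{n,k}=(2k+1)2^{-n}, r_{n,k}=2(k+1)2^{-n}, and h strictly increasing continuous, the functions Φ_{n,k} defined by Φ_{n,k}(t) = L_{n,k}·f(t) on [l_{n,k}, m_{n,k}), Φ_{n,k}(t) = −R_{n,k}·f(t) on [m_{n,k}, r_{n,k}), and 0 otherwise, with L_{n,k} = √((h(r)−h(m))/((h(r)−h(l))(h(m)−h(l)))) and R_{n,k} = √((h(m)−h(l))/((h(r)−h(l))(h(r)−h(m)))), together with Φ_{0,0} = f/√(h(1)−h(0)), form an orthonormal family in L²(0,1). -/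

import Mathlib

open MeasureTheory intervalIntegral

/-- `h(t) = ∫₀ᵗ f(u)² du`. -/
noncomputable def hFun (f : ℝ → ℝ) (t : ℝ) : ℝ := ∫ u in (0:ℝ)..t, (f u) ^ 2

/-- Left endpoint `l_{n,k} = 2k·2⁻ⁿ` of the dyadic support `S_{n,k}`. -/
noncomputable def lPt (n k : ℕ) : ℝ := (2 * k : ℝ) / 2 ^ n

/-- Midpoint `m_{n,k} = (2k+1)·2⁻ⁿ`. -/
noncomputable def mPt (n k : ℕ) : ℝ := (2 * k + 1 : ℝ) / 2 ^ n

/-- Right endpoint `r_{n,k} = 2(k+1)·2⁻ⁿ`. -/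
noncomputable def rPt (n k : ℕ) : ℝ := (2 * k + 2 : ℝ) / 2 ^ n

/-- `L_{n,k} = √((h r − h m)/((h r − h l)(h m − h l)))`. -/
noncomputable def Lcoef (f : ℝ → ℝ) (n k : ℕ) : ℝ :=
  Real.sqrt ((hFun f (rPt n k) - hFun f (mPt n k)) /
    ((hFun f (rPt n k) - hFun f (lPt n k)) * (hFun f (mPt n k) - hFun f (lPt n k))))

/-- `R_{n,k} = √((h m − h l)/((h r − h l)(h r − h m)))`. -/
noncomputable def Rcoef (f : ℝ → ℝ) (n k : ℕ) : ℝ :=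
  Real.sqrt ((hFun f (mPt n k) - hFun f (lPt n k)) /
    ((hFun f (rPt n k) - hFun f (lPt n k)) * (hFun f (rPt n k) - hFun f (mPt n k))))

/-- The auxiliary Haar-like family `Φ_{n,k}`: `Φ_{0,0} = f/√(h 1 − h 0)` and, for
`n > 0`, `L_{n,k}·f` on `[l,m)`, `−R_{n,k}·f` on `[m,r)`, `0` elsewhere. -/
noncomputable def Phi (f : ℝ → ℝ) (n k : ℕ) (t : ℝ) : ℝ :=
  if n = 0 then f t / Real.sqrt (hFun f 1 - hFun f 0)
  else if lPt n k ≤ t ∧ t < mPt n k then Lcoef f n k * f t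
  else if mPt n k ≤ t ∧ t < rPt n k then -(Rcoef f n k * f t)
  else 0

/-! ### endpoint facts -/

lemma lPt_nonneg (n k : ℕ) : 0 ≤ lPt n k := by unfold lPt; positivity
lemma l_lt_m (n k : ℕ) : lPt n k < mPt n k := by
  unfold lPt mPt; gcongr ?_ / _; linarith
lemma m_lt_r (n k : ℕ) : mPt n k < rPt n k := by
  unfold mPt rPt; gcongr ?_ / _; linarith
lemma r_le_one {n k : ℕ} (hk : k < 2 ^ (n-1)) (hn : n ≠ 0) : rPt n k ≤ 1 := by
  unfold rPt
  rw [div_le_one (by positivity)]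
  have h2 : (2:ℝ)^n = 2 * 2^(n-1) := by
    rw [← pow_succ']; congr 1; omega
  rw [h2]
  have : (k:ℝ) + 1 ≤ 2^(n-1) := by exact_mod_cast hk
  nlinarith

/-! ### hFun facts -/

lemma sub_II {f : ℝ → ℝ} (hf2 : IntervalIntegrable (fun u => (f u) ^ 2) volume 0 1)
    {a b : ℝ} (h0 : 0 ≤ a) (h1 : b ≤ 1) (ha1 : a ≤ 1) (hb0 : 0 ≤ b) :
    IntervalIntegrable (fun u => (f u) ^ 2) volume a b := by
  apply hf2.mono_set
  rw [Set.uIcc_of_le (by norm_num : (0:ℝ) ≤ 1)]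
  exact Set.uIcc_subset_Icc ⟨h0, ha1⟩ ⟨hb0, h1⟩

lemma hFun_diff {f : ℝ → ℝ} (hf2 : IntervalIntegrable (fun u => (f u) ^ 2) volume 0 1)
    {a b : ℝ} (h0 : 0 ≤ a) (hab : a ≤ b) (h1 : b ≤ 1) :
    hFun f b - hFun f a = ∫ u in a..b, (f u) ^ 2 := by
  unfold hFun
  exact integral_interval_sub_left (sub_II hf2 le_rfl h1 (by norm_num) (h0.trans hab))
    (sub_II hf2 le_rfl (hab.trans h1) (by norm_num) h0)

lemma hFun_pos {f : ℝ → ℝ} (hmono : StrictMonoOn (hFun f) (Set.Icc 0 1))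
    {a b : ℝ} (h0 : 0 ≤ a) (hab : a < b) (h1 : b ≤ 1) : 0 < hFun f b - hFun f a :=
  sub_pos.2 (hmono ⟨h0, hab.le.trans h1⟩ ⟨h0.trans hab.le, h1⟩ hab)

/-! ### abstract coefficient identities -/

lemma coef_id {P Q : ℝ} (hP : 0 < P) (hQ : 0 < Q) :
    Real.sqrt (Q / ((P + Q) * P)) * P = Real.sqrt (P / ((P + Q) * Q)) * Q := by
  have hS : 0 < P + Q := by linarith
  rw [show Real.sqrt (Q / ((P + Q) * P)) * P = Real.sqrt (Q / ((P + Q) * P) * P ^ 2) by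
      rw [Real.sqrt_mul (by positivity), Real.sqrt_sq hP.le],
    show Real.sqrt (P / ((P + Q) * Q)) * Q = Real.sqrt (P / ((P + Q) * Q) * Q ^ 2) by
      rw [Real.sqrt_mul (by positivity), Real.sqrt_sq hQ.le]]
  congr 1
  field_simp

lemma coef_norm {P Q : ℝ} (hP : 0 < P) (hQ : 0 < Q) :
    (Real.sqrt (Q / ((P + Q) * P))) ^ 2 * P + (Real.sqrt (P / ((P + Q) * Q))) ^ 2 * Q = 1 := by
  have hS : 0 < P + Q := by linarith
  rw [Real.sq_sqrt (by positivity), Real.sq_sqrt (by positivity)]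
  field_simp
  ring

/-! ### pointwise description of Phi -/

lemma Phi_zero_left {f : ℝ → ℝ} {n k : ℕ} {u : ℝ} (hn : n ≠ 0) (hu : u < lPt n k) :
    Phi f n k u = 0 := by
  unfold Phi
  rw [if_neg hn, if_neg (fun h => absurd h.1 (not_le.2 hu)),
    if_neg (fun h => absurd h.1 (not_le.2 (hu.trans (l_lt_m n k))))]

lemma Phi_zero_right {f : ℝ → ℝ} {n k : ℕ} {u : ℝ} (hn : n ≠ 0) (hu : rPt n k ≤ u) :
    Phi f n k u = 0 := by
  unfold Phi
  rw [if_neg hn, if_neg (fun h => absurd h.2 (not_lt.2 (((m_lt_r n k).le.trans hu)))),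
    if_neg (fun h => absurd h.2 (not_lt.2 hu))]

lemma Phi_left {f : ℝ → ℝ} {n k : ℕ} {u : ℝ} (hn : n ≠ 0) (h1 : lPt n k ≤ u)
    (h2 : u < mPt n k) : Phi f n k u = Lcoef f n k * f u := by
  unfold Phi
  rw [if_neg hn, if_pos ⟨h1, h2⟩]

lemma Phi_right {f : ℝ → ℝ} {n k : ℕ} {u : ℝ} (hn : n ≠ 0) (h1 : mPt n k ≤ u)
    (h2 : u < rPt n k) : Phi f n k u = -(Rcoef f n k * f u) := by
  unfold Phi
  rw [if_neg hn, if_neg (fun h => absurd h.2 (not_lt.2 h1)), if_pos ⟨h1, h2⟩]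

lemma Phi_meas {f : ℝ → ℝ} (hfm : Measurable f) (n k : ℕ) : Measurable (Phi f n k) := by
  unfold Phi
  by_cases hn : n = 0
  · simp only [if_pos hn]
    exact hfm.div_const _
  · simp only [if_neg hn]
    refine Measurable.ite (measurableSet_Ico (a := lPt n k) (b := mPt n k))
      (measurable_const.mul hfm) ?_
    exact Measurable.ite (measurableSet_Ico (a := mPt n k) (b := rPt n k))
      ((measurable_const.mul hfm)).neg measurable_const

noncomputable def PhiC (f : ℝ → ℝ) (n k : ℕ) : ℝ :=
  (Real.sqrt (hFun f 1 - hFun f 0))⁻¹ + Lcoef f n k + Rcoef f n k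

lemma PhiC_nonneg (f : ℝ → ℝ) (n k : ℕ) : 0 ≤ PhiC f n k := by
  unfold PhiC Lcoef Rcoef
  positivity

lemma Phi_abs_le (f : ℝ → ℝ) (n k : ℕ) (u : ℝ) : |Phi f n k u| ≤ PhiC f n k * |f u| := by
  have h1 : (0:ℝ) ≤ (Real.sqrt (hFun f 1 - hFun f 0))⁻¹ := by positivity
  have h2 : 0 ≤ Lcoef f n k := Real.sqrt_nonneg _
  have h3 : 0 ≤ Rcoef f n k := Real.sqrt_nonneg _
  have hfu : 0 ≤ |f u| := abs_nonneg _
  unfold Phi PhiC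
  split_ifs with g1 g2 g3
  · rw [div_eq_mul_inv, abs_mul, abs_of_nonneg (by positivity : (0:ℝ) ≤ (Real.sqrt (hFun f 1 - hFun f 0))⁻¹)]
    nlinarith
  · rw [abs_mul, abs_of_nonneg h2]
    nlinarith
  · rw [abs_neg, abs_mul, abs_of_nonneg h3]
    nlinarith
  · simp only [abs_zero]
    positivity

/-! ### integrability of dominated products -/

lemma prod_II {f : ℝ → ℝ} (hf2 : IntervalIntegrable (fun u => (f u) ^ 2) volume 0 1)
    {g : ℝ → ℝ} (hgm : Measurable g) {C : ℝ} (hb : ∀ u, |g u| ≤ C * (f u) ^ 2)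
    {a b : ℝ} (hab : a ≤ b) (h0 : 0 ≤ a) (h1 : b ≤ 1) :
    IntervalIntegrable g volume a b := by
  rw [intervalIntegrable_iff_integrableOn_Ioc_of_le hab]
  have hC : IntegrableOn (fun u => C * (f u) ^ 2) (Set.Ioc a b) := by
    apply Integrable.const_mul
    exact (intervalIntegrable_iff_integrableOn_Ioc_of_le hab).1
      (sub_II hf2 h0 h1 (hab.trans h1) (h0.trans hab))
  exact Integrable.mono' hC hgm.aestronglyMeasurable.restrict
    (Filter.Eventually.of_forall fun u => by simpa using hb u)

lemma ae_ne (c : ℝ) : ∀ᵐ x : ℝ, x ≠ c := by simp [ae_iff, measure_singleton]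
lemma split_aux {f : ℝ → ℝ} (hfm : Measurable f)
    (hf2 : IntervalIntegrable (fun u => (f u) ^ 2) volume 0 1)
    {n k : ℕ} (hn : n ≠ 0) (hk : k < 2 ^ (n-1))
    {g : ℝ → ℝ} (hgm : Measurable g) {Cg : ℝ} (hgb : ∀ u, |g u| ≤ Cg * |f u|) :
    ∫ u in (0:ℝ)..1, Phi f n k u * g u
      = Lcoef f n k * (∫ u in lPt n k..mPt n k, f u * g u)
        - Rcoef f n k * ∫ u in mPt n k..rPt n k, f u * g u := by
  set l := lPt n k with hl
  set m := mPt n k with hm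
  set r := rPt n k with hr
  have hl0 : 0 ≤ l := lPt_nonneg n k
  have hlm : l < m := l_lt_m n k
  have hmr : m < r := m_lt_r n k
  have hr1 : r ≤ 1 := r_le_one hk hn
  have hbound : ∀ u, |Phi f n k u * g u| ≤ (PhiC f n k * Cg) * (f u) ^ 2 := by
    intro u
    rw [abs_mul]
    calc |Phi f n k u| * |g u| ≤ (PhiC f n k * |f u|) * (Cg * |f u|) :=
          mul_le_mul (Phi_abs_le f n k u) (hgb u) (abs_nonneg _)
            (mul_nonneg (PhiC_nonneg f n k) (abs_nonneg _))
      _ = (PhiC f n k * Cg) * (f u) ^ 2 := by rw [← sq_abs]; ring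
  have hPm : Measurable (fun u => Phi f n k u * g u) := (Phi_meas hfm n k).mul hgm
  have II : ∀ a b : ℝ, 0 ≤ a → a ≤ b → b ≤ 1 →
      IntervalIntegrable (fun u => Phi f n k u * g u) volume a b :=
    fun a b h0 hab h1 => prod_II hf2 hPm hbound hab h0 h1
  have A : (∫ u in m..r, Phi f n k u * g u) + ∫ u in r..(1:ℝ), Phi f n k u * g u
      = ∫ u in m..(1:ℝ), Phi f n k u * g u :=
    integral_add_adjacent_intervals (II m r (hl0.trans hlm.le) hmr.le hr1) (II r 1 (by linarith) hr1 le_rfl)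
  have B : (∫ u in l..m, Phi f n k u * g u) + ∫ u in m..(1:ℝ), Phi f n k u * g u
      = ∫ u in l..(1:ℝ), Phi f n k u * g u :=
    integral_add_adjacent_intervals (II l m hl0 hlm.le (by linarith)) (II m 1 (by linarith) (by linarith) le_rfl)
  have C : (∫ u in (0:ℝ)..l, Phi f n k u * g u) + ∫ u in l..(1:ℝ), Phi f n k u * g u
      = ∫ u in (0:ℝ)..1, Phi f n k u * g u :=
    integral_add_adjacent_intervals (II 0 l le_rfl hl0 (by linarith)) (II l 1 hl0 (by linarith) le_rfl)
  have p1 : (∫ u in (0:ℝ)..l, Phi f n k u * g u) = 0 := by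
    have h0 : (∫ u in (0:ℝ)..l, Phi f n k u * g u) = ∫ u in (0:ℝ)..l, (0:ℝ) := by
      apply intervalIntegral.integral_congr_ae
      filter_upwards [ae_ne l] with u hne hu
      rw [Set.uIoc_of_le hl0] at hu
      rw [Phi_zero_left hn (lt_of_le_of_ne hu.2 hne), zero_mul]
    simpa using h0
  have p4 : (∫ u in r..(1:ℝ), Phi f n k u * g u) = 0 := by
    have h0 : (∫ u in r..(1:ℝ), Phi f n k u * g u) = ∫ u in r..(1:ℝ), (0:ℝ) := by
      apply intervalIntegral.integral_congr_ae
      apply Filter.Eventually.of_forall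
      intro u hu
      rw [Set.uIoc_of_le hr1] at hu
      rw [Phi_zero_right hn hu.1.le, zero_mul]
    simpa using h0
  have p2 : (∫ u in l..m, Phi f n k u * g u) = Lcoef f n k * ∫ u in l..m, f u * g u := by
    rw [← intervalIntegral.integral_const_mul]
    apply intervalIntegral.integral_congr_ae
    filter_upwards [ae_ne m] with u hne hu
    rw [Set.uIoc_of_le hlm.le] at hu
    rw [Phi_left hn hu.1.le (lt_of_le_of_ne hu.2 hne), mul_assoc]
  have p3 : (∫ u in m..r, Phi f n k u * g u) = -(Rcoef f n k * ∫ u in m..r, f u * g u) := by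
    rw [← intervalIntegral.integral_const_mul, ← intervalIntegral.integral_neg]
    apply intervalIntegral.integral_congr_ae
    filter_upwards [ae_ne r] with u hne hu
    rw [Set.uIoc_of_le hmr.le] at hu
    rw [Phi_right hn hu.1.le (lt_of_le_of_ne hu.2 hne)]
    ring
  rw [← C, ← B, ← A, p1, p2, p3, p4]
  ring

lemma norm_aux {f : ℝ → ℝ} (hfm : Measurable f)
    (hf2 : IntervalIntegrable (fun u => (f u) ^ 2) volume 0 1)
    (hmono : StrictMonoOn (hFun f) (Set.Icc 0 1))
    {n k : ℕ} (hn : n ≠ 0) (hk : k < 2 ^ (n-1)) :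
    ∫ u in (0:ℝ)..1, Phi f n k u * Phi f n k u = 1 := by
  have hl0 : 0 ≤ lPt n k := lPt_nonneg n k
  have hlm : lPt n k < mPt n k := l_lt_m n k
  have hmr : mPt n k < rPt n k := m_lt_r n k
  have hr1 : rPt n k ≤ 1 := r_le_one hk hn
  have hP : 0 < hFun f (mPt n k) - hFun f (lPt n k) := hFun_pos hmono hl0 hlm (by linarith)
  have hQ : 0 < hFun f (rPt n k) - hFun f (mPt n k) := hFun_pos hmono (by linarith) hmr hr1
  rw [split_aux hfm hf2 hn hk (Phi_meas hfm n k) (Phi_abs_le f n k)]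
  have p2 : (∫ u in lPt n k..mPt n k, f u * Phi f n k u)
      = Lcoef f n k * (hFun f (mPt n k) - hFun f (lPt n k)) := by
    rw [hFun_diff hf2 hl0 hlm.le (by linarith), ← intervalIntegral.integral_const_mul]
    apply intervalIntegral.integral_congr_ae
    filter_upwards [ae_ne (mPt n k)] with u hne hu
    rw [Set.uIoc_of_le hlm.le] at hu
    rw [Phi_left hn hu.1.le (lt_of_le_of_ne hu.2 hne)]
    ring
  have p3 : (∫ u in mPt n k..rPt n k, f u * Phi f n k u)
      = -(Rcoef f n k * (hFun f (rPt n k) - hFun f (mPt n k))) := by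
    rw [hFun_diff hf2 (by linarith) hmr.le hr1, ← intervalIntegral.integral_const_mul,
      ← intervalIntegral.integral_neg]
    apply intervalIntegral.integral_congr_ae
    filter_upwards [ae_ne (rPt n k)] with u hne hu
    rw [Set.uIoc_of_le hmr.le] at hu
    rw [Phi_right hn hu.1.le (lt_of_le_of_ne hu.2 hne)]
    ring
  rw [p2, p3]
  have hS : hFun f (rPt n k) - hFun f (lPt n k)
      = (hFun f (mPt n k) - hFun f (lPt n k)) + (hFun f (rPt n k) - hFun f (mPt n k)) := by ring
  have hid := coef_norm hP hQ
  unfold Lcoef Rcoef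
  rw [hS]
  set P := hFun f (mPt n k) - hFun f (lPt n k)
  set Q := hFun f (rPt n k) - hFun f (mPt n k)
  nlinarith [hid]

lemma orth_aux {f : ℝ → ℝ} (hfm : Measurable f)
    (hf2 : IntervalIntegrable (fun u => (f u) ^ 2) volume 0 1)
    (hmono : StrictMonoOn (hFun f) (Set.Icc 0 1))
    {n k : ℕ} (hn : n ≠ 0) (hk : k < 2 ^ (n-1))
    {g : ℝ → ℝ} (hgm : Measurable g) {Cg : ℝ} (hgb : ∀ u, |g u| ≤ Cg * |f u|)
    {c : ℝ} (hc : ∀ᵐ u : ℝ, u ∈ Set.Ioc (lPt n k) (rPt n k) → g u = c * f u) :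
    ∫ u in (0:ℝ)..1, Phi f n k u * g u = 0 := by
  have hl0 : 0 ≤ lPt n k := lPt_nonneg n k
  have hlm : lPt n k < mPt n k := l_lt_m n k
  have hmr : mPt n k < rPt n k := m_lt_r n k
  have hr1 : rPt n k ≤ 1 := r_le_one hk hn
  have hP : 0 < hFun f (mPt n k) - hFun f (lPt n k) := hFun_pos hmono hl0 hlm (by linarith)
  have hQ : 0 < hFun f (rPt n k) - hFun f (mPt n k) := hFun_pos hmono (by linarith) hmr hr1
  rw [split_aux hfm hf2 hn hk hgm hgb]
  have p2 : (∫ u in lPt n k..mPt n k, f u * g u)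
      = c * (hFun f (mPt n k) - hFun f (lPt n k)) := by
    rw [hFun_diff hf2 hl0 hlm.le (by linarith), ← intervalIntegral.integral_const_mul]
    apply intervalIntegral.integral_congr_ae
    filter_upwards [hc] with u hcu hu
    rw [Set.uIoc_of_le hlm.le] at hu
    rw [hcu ⟨hu.1, hu.2.trans hmr.le⟩]
    ring
  have p3 : (∫ u in mPt n k..rPt n k, f u * g u)
      = c * (hFun f (rPt n k) - hFun f (mPt n k)) := by
    rw [hFun_diff hf2 (by linarith) hmr.le hr1, ← intervalIntegral.integral_const_mul]
    apply intervalIntegral.integral_congr_ae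
    filter_upwards [hc] with u hcu hu
    rw [Set.uIoc_of_le hmr.le] at hu
    rw [hcu ⟨hlm.trans_le hu.1.le, hu.2⟩]
    ring
  rw [p2, p3]
  have hS : hFun f (rPt n k) - hFun f (lPt n k)
      = (hFun f (mPt n k) - hFun f (lPt n k)) + (hFun f (rPt n k) - hFun f (mPt n k)) := by ring
  have hid := coef_id hP hQ
  unfold Lcoef Rcoef
  rw [hS]
  set P := hFun f (mPt n k) - hFun f (lPt n k)
  set Q := hFun f (rPt n k) - hFun f (mPt n k)
  linear_combination c * hid

lemma nat_nest (e k k' : ℕ) (he : 1 ≤ e) :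
    2*k'+2 ≤ (2*k) * (2*e) ∨ ((2*k)*(2*e) ≤ 2*k' ∧ 2*k'+2 ≤ (2*k+1)*(2*e)) ∨
    ((2*k+1)*(2*e) ≤ 2*k' ∧ 2*k'+2 ≤ (2*k+2)*(2*e)) ∨ (2*k+2)*(2*e) ≤ 2*k' := by
  have h1 : (2*k)*(2*e) = 4*(k*e) := by ring
  have h2 : (2*k+1)*(2*e) = 4*(k*e) + 2*e := by ring
  have h3 : (2*k+2)*(2*e) = 4*(k*e) + 4*e := by ring
  rw [h1, h2, h3]
  set y := k*e
  omega

lemma cast_div_le {p q n n' : ℕ} (hle : n ≤ n') (h : p * 2^(n'-n) ≤ q) :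
    (p:ℝ)/2^n ≤ (q:ℝ)/2^n' := by
  rw [div_le_div_iff₀ (by positivity) (by positivity)]
  have h2 : (2:ℝ)^n' = 2^n * 2^(n'-n) := by rw [← pow_add]; congr 1; omega
  rw [h2]
  have hc : ((p * 2^(n'-n) : ℕ):ℝ) ≤ ((q:ℕ):ℝ) := Nat.cast_le.2 h
  push_cast at hc
  nlinarith [pow_pos (by norm_num : (0:ℝ) < 2) n, pow_pos (by norm_num : (0:ℝ) < 2) (n'-n)]

lemma cast_le_div {p q n n' : ℕ} (hle : n ≤ n') (h : q ≤ p * 2^(n'-n)) :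
    (q:ℝ)/2^n' ≤ (p:ℝ)/2^n := by
  rw [div_le_div_iff₀ (by positivity) (by positivity)]
  have h2 : (2:ℝ)^n' = 2^n * 2^(n'-n) := by rw [← pow_add]; congr 1; omega
  rw [h2]
  have hc : ((q:ℕ):ℝ) ≤ ((p * 2^(n'-n) : ℕ):ℝ) := Nat.cast_le.2 h
  push_cast at hc
  nlinarith [pow_pos (by norm_num : (0:ℝ) < 2) n, pow_pos (by norm_num : (0:ℝ) < 2) (n'-n)]

lemma nest {n k n' k' : ℕ} (hnn : n < n') :
    rPt n' k' ≤ lPt n k ∨ (lPt n k ≤ lPt n' k' ∧ rPt n' k' ≤ mPt n k) ∨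
    (mPt n k ≤ lPt n' k' ∧ rPt n' k' ≤ rPt n k) ∨ rPt n k ≤ lPt n' k' := by
  have hle : n ≤ n' := hnn.le
  have hM : (2:ℕ)^(n'-n) = 2 * 2^(n'-n-1) := by rw [← pow_succ']; congr 1; omega
  have H := nat_nest (2^(n'-n-1)) k k' Nat.one_le_two_pow
  rw [← hM] at H
  have c1 : lPt n k = ((2*k : ℕ):ℝ)/2^n := by unfold lPt; push_cast; ring
  have c2 : mPt n k = ((2*k+1 : ℕ):ℝ)/2^n := by unfold mPt; push_cast; ring
  have c3 : rPt n k = ((2*k+2 : ℕ):ℝ)/2^n := by unfold rPt; push_cast; ring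
  have c4 : lPt n' k' = ((2*k' : ℕ):ℝ)/2^n' := by unfold lPt; push_cast; ring
  have c5 : rPt n' k' = ((2*k'+2 : ℕ):ℝ)/2^n' := by unfold rPt; push_cast; ring
  rw [c1, c2, c3, c4, c5]
  rcases H with H | ⟨H1, H2⟩ | ⟨H1, H2⟩ | H
  · exact Or.inl (cast_le_div hle H)
  · exact Or.inr (Or.inl ⟨cast_div_le hle H1, cast_le_div hle H2⟩)
  · exact Or.inr (Or.inr (Or.inl ⟨cast_div_le hle H1, cast_le_div hle H2⟩))
  · exact Or.inr (Or.inr (Or.inr (cast_div_le hle H)))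

lemma same_level_le {n k k' : ℕ} (h : k < k') : rPt n k ≤ lPt n k' := by
  unfold rPt lPt
  gcongr ?_ / _
  have : (k:ℝ) + 1 ≤ (k':ℝ) := by exact_mod_cast h
  linarith

lemma norm0 {f : ℝ → ℝ}
    (hf2 : IntervalIntegrable (fun u => (f u) ^ 2) volume 0 1)
    (hmono : StrictMonoOn (hFun f) (Set.Icc 0 1)) (k k' : ℕ) :
    ∫ u in (0:ℝ)..1, Phi f 0 k u * Phi f 0 k' u = 1 := by
  have hD : 0 < hFun f 1 - hFun f 0 := hFun_pos hmono le_rfl one_pos le_rfl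
  have hsq : Real.sqrt (hFun f 1 - hFun f 0) * Real.sqrt (hFun f 1 - hFun f 0)
      = hFun f 1 - hFun f 0 := Real.mul_self_sqrt hD.le
  have key : ∀ u : ℝ, Phi f 0 k u * Phi f 0 k' u = (f u)^2 * (hFun f 1 - hFun f 0)⁻¹ := by
    intro u
    unfold Phi
    rw [if_pos rfl, if_pos rfl, div_mul_div_comm, hsq, ← sq, div_eq_mul_inv]
  rw [intervalIntegral.integral_congr (g := fun u => (f u)^2 * (hFun f 1 - hFun f 0)⁻¹)
    (fun u _ => key u)]
  rw [intervalIntegral.integral_mul_const, ← hFun_diff hf2 le_rfl zero_le_one le_rfl]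
  exact mul_inv_cancel₀ hD.ne'

lemma orth_pair {f : ℝ → ℝ} (hfm : Measurable f)
    (hf2 : IntervalIntegrable (fun u => (f u) ^ 2) volume 0 1)
    (hmono : StrictMonoOn (hFun f) (Set.Icc 0 1))
    {n k n' k' : ℕ} (hk : k < 2 ^ (n-1)) (hk' : k' < 2 ^ (n'-1))
    (hn' : n' ≠ 0) (hord : n < n' ∨ (n = n' ∧ k ≠ k')) :
    ∫ u in (0:ℝ)..1, Phi f n' k' u * Phi f n k u = 0 := by
  by_cases hn : n = 0
  · -- coarse is the constant-multiple-of-f function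
    subst hn
    refine orth_aux hfm hf2 hmono hn' hk' (Phi_meas hfm 0 k) (Phi_abs_le f 0 k)
      (c := (Real.sqrt (hFun f 1 - hFun f 0))⁻¹) ?_
    apply Filter.Eventually.of_forall
    intro u _
    unfold Phi
    rw [if_pos rfl, div_eq_mul_inv, mul_comm]
  · rcases hord with hlt | ⟨rfl, hkk⟩
    · rcases nest (n := n) (k := k) (n' := n') (k' := k') hlt with H | ⟨H1, H2⟩ | ⟨H1, H2⟩ | H
      · refine orth_aux hfm hf2 hmono hn' hk' (Phi_meas hfm n k) (Phi_abs_le f n k)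
          (c := 0) ?_
        filter_upwards [ae_ne (lPt n k)] with u hne hu
        rw [Phi_zero_left hn (lt_of_le_of_ne (hu.2.trans H) hne), zero_mul]
      · refine orth_aux hfm hf2 hmono hn' hk' (Phi_meas hfm n k) (Phi_abs_le f n k)
          (c := Lcoef f n k) ?_
        filter_upwards [ae_ne (mPt n k)] with u hne hu
        exact Phi_left hn (H1.trans hu.1.le) (lt_of_le_of_ne (hu.2.trans H2) hne)
      · refine orth_aux hfm hf2 hmono hn' hk' (Phi_meas hfm n k) (Phi_abs_le f n k)
          (c := -(Rcoef f n k)) ?_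
        filter_upwards [ae_ne (rPt n k)] with u hne hu
        rw [Phi_right hn (H1.trans hu.1.le) (lt_of_le_of_ne (hu.2.trans H2) hne), neg_mul]
      · refine orth_aux hfm hf2 hmono hn' hk' (Phi_meas hfm n k) (Phi_abs_le f n k)
          (c := 0) ?_
        apply Filter.Eventually.of_forall
        intro u hu
        rw [Phi_zero_right hn (H.trans hu.1.le), zero_mul]
    · rcases lt_or_gt_of_ne hkk with hkk' | hkk'
      · refine orth_aux hfm hf2 hmono hn' hk' (Phi_meas hfm n k) (Phi_abs_le f n k)
          (c := 0) ?_
        apply Filter.Eventually.of_forall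
        intro u hu
        rw [Phi_zero_right hn ((same_level_le hkk').trans hu.1.le), zero_mul]
      · refine orth_aux hfm hf2 hmono hn' hk' (Phi_meas hfm n k) (Phi_abs_le f n k)
          (c := 0) ?_
        filter_upwards [ae_ne (lPt n k)] with u hne hu
        rw [Phi_zero_left hn (lt_of_le_of_ne (hu.2.trans (same_level_le hkk')) hne), zero_mul]

/-- the family `Φ_{n,k}` (indices `k < 2^{n-1}`, with the
convention that `n = 0` only carries `k = 0`) is orthonormal in `L²(0,1)`. -/
theorem Phi_orthonormal
    (f : ℝ → ℝ) (hfm : Measurable f)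
    (hf2 : IntervalIntegrable (fun u => (f u) ^ 2) MeasureTheory.volume 0 1)
    (hmono : StrictMonoOn (hFun f) (Set.Icc 0 1)) :
    ∀ n k n' k' : ℕ, k < 2 ^ (n - 1) → k' < 2 ^ (n' - 1) →
      ∫ u in (0:ℝ)..1, Phi f n k u * Phi f n' k' u
        = if (n, k) = (n', k') then 1 else 0 := by
  intro n k n' k' hk hk'
  have comm : (∫ u in (0:ℝ)..1, Phi f n k u * Phi f n' k' u)
      = ∫ u in (0:ℝ)..1, Phi f n' k' u * Phi f n k u :=
    intervalIntegral.integral_congr (fun u _ => mul_comm _ _)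
  by_cases heq : (n, k) = (n', k')
  · rw [if_pos heq]
    injection heq with h1 h2
    subst h1; subst h2
    by_cases hn : n = 0
    · subst hn; exact norm0 hf2 hmono k k
    · exact norm_aux hfm hf2 hmono hn hk
  · rw [if_neg heq]
    rcases Nat.lt_trichotomy n n' with hlt | heqn | hgt
    · rw [comm]
      exact orth_pair hfm hf2 hmono hk hk' (by omega) (Or.inl hlt)
    · subst heqn
      have hkk : k ≠ k' := fun h => heq (by rw [h])
      have hn0 : n ≠ 0 := by
        rintro rfl
        have e : (2:ℕ)^(0-1) = 1 := by norm_num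
        rw [e] at hk hk'
        omega
      rw [comm]
      exact orth_pair hfm hf2 hmono hk hk' hn0 (Or.inr ⟨rfl, hkk⟩)
    · exact orth_pair hfm hf2 hmono hk' hk (by omega) (Or.inl hgt)
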